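/- Let Φ be a reduced root system, γ ∈ Φ⁺ a positive root with γ = α + β for a simple root α and a positive root β. If iβ − jα ∈ Φ⁺ for some positive integers i, j, then (iβ − jα) − γ = (i−1)β − (j+1)α is either a positive root or not an element of Φ ∪ {0}. -/

import Mathlib

/-- A reduced root system in a real inner product space, together with a base of simple
roots with respect to which every root is a non-negative or non-positive integral
combination of simple roots. -/
structure RootSystemWithBase (V : Type*) [NormedAddCommGroup V] [InnerProductSpace ℝ V] where
  roots : Finset V
  simples : Finset V
  simples_subset : simples ⊆ roots
  simples_indep : LinearIndependent ℝ (fun a : {x // x ∈ simples} => (a : V))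
  root_ne_zero : ∀ α ∈ roots, α ≠ 0
  span_eq_top : Submodule.span ℝ (roots : Set V) = ⊤
  reflect_mem : ∀ α ∈ roots, ∀ β ∈ roots,
    β - ((2 * inner ℝ β α / inner ℝ α α : ℝ)) • α ∈ roots
  pairing_int : ∀ α ∈ roots, ∀ β ∈ roots, ∃ n : ℤ, (2 * inner ℝ β α / inner ℝ α α : ℝ) = (n : ℝ)
  reduced : ∀ α ∈ roots, ∀ t : ℝ, t • α ∈ roots → t = 1 ∨ t = -1
  pos_or_neg : ∀ β ∈ roots,
    (∃ c : {x // x ∈ simples} → ℕ, β = ∑ a : {x // x ∈ simples}, (c a : ℝ) • (a : V)) ∨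
    (∃ c : {x // x ∈ simples} → ℕ, -β = ∑ a : {x // x ∈ simples}, (c a : ℝ) • (a : V))

/-- A positive root: a root which is a non-negative integral combination of the simple roots. -/
def RootSystemWithBase.IsPos {V : Type*} [NormedAddCommGroup V] [InnerProductSpace ℝ V]
    (S : RootSystemWithBase V) (β : V) : Prop :=
  β ∈ S.roots ∧
    ∃ c : {x // x ∈ S.simples} → ℕ, β = ∑ a : {x // x ∈ S.simples}, (c a : ℝ) • (a : V)

/-- Let `Φ` be a reduced root system, `γ = α + β ∈ Φ⁺` with `α` simple and `β ∈ Φ⁺`.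
If `iβ − jα ∈ Φ⁺` for some positive integers `i, j`, then
`(iβ − jα) − γ = (i−1)β − (j+1)α` is either a positive root or not in `Φ ∪ {0}`. -/
theorem statement4 {V : Type*} [NormedAddCommGroup V] [InnerProductSpace ℝ V]
    (S : RootSystemWithBase V) (α β γ : V)
    (hα : α ∈ S.simples) (hβ : S.IsPos β) (hγdef : γ = α + β) (hγ : S.IsPos γ)
    (i j : ℕ) (hi : 0 < i) (hj : 0 < j)
    (hij : S.IsPos ((i : ℝ) • β - (j : ℝ) • α)) :
    S.IsPos (((i : ℝ) - 1) • β - ((j : ℝ) + 1) • α) ∨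
      ((((i : ℝ) - 1) • β - ((j : ℝ) + 1) • α) ∉ S.roots ∧
        (((i : ℝ) - 1) • β - ((j : ℝ) + 1) • α) ≠ 0) := by
  classical
  set δ : V := ((i : ℝ) - 1) • β - ((j : ℝ) + 1) • α with hδ
  obtain ⟨hβr, b, hb⟩ := hβ
  set α₀ : {x // x ∈ S.simples} := ⟨α, hα⟩ with hα₀
  have hαr : α ∈ S.roots := S.simples_subset hα
  -- If β is a multiple of α (all other coefficients vanish), we get a contradiction.
  have key : (∀ a : {x // x ∈ S.simples}, a ≠ α₀ → (b a : ℝ) = 0) → False := by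
    intro h
    have hβα : β = (b α₀ : ℝ) • α := by
      rw [hb, Fintype.sum_eq_single α₀ (fun a ha => by rw [h a ha, zero_smul])]
    have hred := S.reduced α hαr (b α₀) (hβα ▸ hβr)
    have hb1 : (b α₀ : ℝ) = 1 := by
      rcases hred with h1 | h1
      · exact h1
      · exfalso; have : (0:ℝ) ≤ (b α₀ : ℝ) := Nat.cast_nonneg _
        linarith
    have hβeq : β = α := by rw [hβα, hb1, one_smul]
    have h2 : γ = (2 : ℝ) • α := by rw [hγdef, hβeq, two_smul]
    rcases S.reduced α hαr 2 (h2 ▸ hγ.1) with h1 | h1 <;> norm_num at h1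
  -- auxiliary: rewriting δ plus a combination as a single sum
  have hsum : ∀ c : {x // x ∈ S.simples} → ℝ,
      δ + ∑ a : {x // x ∈ S.simples}, c a • (a : V) =
      ∑ a : {x // x ∈ S.simples},
        ((((i : ℝ) - 1) * (b a) + c a - ((j : ℝ) + 1) * (if a = α₀ then 1 else 0)) • (a : V)) := by
    intro c
    have hα' : (α₀ : V) = α := rfl
    have hITE : ∑ a : {x // x ∈ S.simples},
        (((j : ℝ) + 1) * (if a = α₀ then 1 else 0)) • (a : V) = ((j : ℝ) + 1) • α := by
      rw [Fintype.sum_eq_single α₀ (fun a ha => by simp [ha])]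
      simp [hα']
    calc δ + ∑ a : {x // x ∈ S.simples}, c a • (a : V)
        = (((i : ℝ) - 1) • ∑ a : {x // x ∈ S.simples}, (b a : ℝ) • (a : V))
            + (∑ a : {x // x ∈ S.simples}, c a • (a : V))
            - ∑ a : {x // x ∈ S.simples},
                (((j : ℝ) + 1) * (if a = α₀ then 1 else 0)) • (a : V) := by
          rw [hITE, hδ, hb]; abel
      _ = _ := by
          rw [Finset.smul_sum, ← Finset.sum_add_distrib, ← Finset.sum_sub_distrib]
          refine Finset.sum_congr rfl fun a _ => ?_
          module
  by_cases hroot : δ ∈ S.roots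
  · -- δ is a root; show it is positive
    -- first, i = 1 is impossible
    have hi1 : i ≠ 1 := by
      intro h1
      have hδα : δ = (-((j : ℝ) + 1)) • α := by
        rw [hδ, h1]; push_cast; module
      rcases S.reduced α hαr _ (hδα ▸ hroot) with h | h
      · have : (0:ℝ) ≤ (j : ℝ) := Nat.cast_nonneg _
        rw [neg_eq_iff_eq_neg] at h; linarith
      · have : (j : ℝ) = 0 := by linarith [neg_eq_iff_eq_neg.mp h]
        exact absurd (Nat.cast_eq_zero.mp this) hj.ne'
    have hi2 : 2 ≤ i := by omega
    rcases S.pos_or_neg δ hroot with hpos | ⟨c, hc⟩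
    · exact Or.inl ⟨hroot, hpos⟩
    · exfalso
      have hzero : δ + ∑ a : {x // x ∈ S.simples}, (c a : ℝ) • (a : V) = 0 := by
        rw [← hc]; abel
      rw [hsum] at hzero
      have hcoef := Fintype.linearIndependent_iff.mp S.simples_indep _ hzero
      refine key fun a ha => ?_
      have := hcoef a
      rw [if_neg ha, mul_zero, sub_zero] at this
      have h1 : (0:ℝ) ≤ ((i : ℝ) - 1) * (b a) := by
        apply mul_nonneg _ (Nat.cast_nonneg _)
        have : (2:ℝ) ≤ (i : ℝ) := by exact_mod_cast hi2
        linarith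
      have h2 : (0:ℝ) ≤ (c a : ℝ) := Nat.cast_nonneg _
      have hb0 : ((i : ℝ) - 1) * (b a) = 0 := by linarith
      have hine : (i : ℝ) - 1 ≠ 0 := by
        have : (2:ℝ) ≤ (i : ℝ) := by exact_mod_cast hi2
        linarith
      exact (mul_eq_zero.mp hb0).resolve_left hine
  · -- δ is not a root; show δ ≠ 0
    refine Or.inr ⟨hroot, fun h0 => ?_⟩
    have hzero : δ + ∑ a : {x // x ∈ S.simples}, (0:ℝ) • (a : V) = 0 := by
      simp [h0]
    rw [hsum] at hzero
    have hcoef := Fintype.linearIndependent_iff.mp S.simples_indep _ hzero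
    -- coefficient at α₀ : (i-1) * b α₀ = j + 1, so i ≠ 1
    have hcα := hcoef α₀
    rw [if_pos rfl] at hcα
    have hi1 : i ≠ 1 := by
      intro h1
      rw [h1] at hcα
      have : (0:ℝ) ≤ (j : ℝ) := Nat.cast_nonneg _
      norm_num at hcα
      linarith
    have hi2 : 2 ≤ i := by omega
    refine key fun a ha => ?_
    have := hcoef a
    rw [if_neg ha, mul_zero, sub_zero, add_zero] at this
    have hine : (i : ℝ) - 1 ≠ 0 := by
      have : (2:ℝ) ≤ (i : ℝ) := by exact_mod_cast hi2
      linarith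
    exact (mul_eq_zero.mp this).resolve_left hine
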